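/- Let Ω ⊆ ℂ be open, I ⊆ ℝ an open interval, β ∈ ℝ, V : ℂ → ℂ entire, and T : Ω → ℂ holomorphic (independent of time). Let U : I × Ω → ℂ be continuously differentiable, holomorphic in the second variable, satisfying ∂_t U(t,z) = (β/2)U·∂_z U + V′(z)·∂_z U + V″(z)·U + T′(z) on I × Ω, and let z : I → Ω be differentiable with z′(t) = −(β/2)U(t,z(t)) − V′(z(t)). Then z is twice differentiable with z″(t) = V″(z(t))·V′(z(t)) − (β/2)T′(z(t)), and consequently the function t ↦ z′(t)² − V′(z(t))² + β·T(z(t)) is constant on I. -/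

import Mathlib

/-- when `T` is time-independent, the characteristics
`z' = -(β/2) U(t,z) - V'(z)` of the generalized complex Burgers equation satisfy the
autonomous second-order ODE `z'' = V''(z) V'(z) - (β/2) T'(z)`, and consequently
`t ↦ z'(t)² - V'(z t)² + β T(z t)` is constant. -/
theorem stmt_4 (Ω : Set ℂ) (hΩ : IsOpen Ω) (I : Set ℝ) (hIopen : IsOpen I)
    (hIconn : I.OrdConnected) (β : ℝ) (V : ℂ → ℂ) (hV : Differentiable ℂ V)
    (T : ℂ → ℂ) (hT : ∀ z ∈ Ω, DifferentiableAt ℂ T z)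
    (U : ℝ → ℂ → ℂ)
    (hUC1 : ContDiffOn ℝ 1 (fun p : ℝ × ℂ => U p.1 p.2) (I ×ˢ Ω))
    (hUhol : ∀ t ∈ I, ∀ z ∈ Ω, DifferentiableAt ℂ (U t) z)
    (hPDE : ∀ t ∈ I, ∀ z ∈ Ω,
      deriv (fun τ : ℝ => U τ z) t =
        ((β : ℂ) / 2) * U t z * deriv (U t) z + deriv V z * deriv (U t) z
          + deriv (deriv V) z * U t z + deriv T z)
    (z : ℝ → ℂ) (hzΩ : ∀ t ∈ I, z t ∈ Ω)
    (hzder : ∀ t ∈ I, HasDerivAt z (-((β : ℂ) / 2) * U t (z t) - deriv V (z t)) t) :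
    (∀ t ∈ I,
      HasDerivAt (fun τ : ℝ => -((β : ℂ) / 2) * U τ (z τ) - deriv V (z τ))
        (deriv (deriv V) (z t) * deriv V (z t) - ((β : ℂ) / 2) * deriv T (z t)) t) ∧
    (∀ t₁ ∈ I, ∀ t₂ ∈ I,
      (-((β : ℂ) / 2) * U t₁ (z t₁) - deriv V (z t₁)) ^ 2 - (deriv V (z t₁)) ^ 2
          + (β : ℂ) * T (z t₁)
        = (-((β : ℂ) / 2) * U t₂ (z t₂) - deriv V (z t₂)) ^ 2 - (deriv V (z t₂)) ^ 2
          + (β : ℂ) * T (z t₂)) := by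
  -- `deriv V` is entire, hence differentiable
  have hVan : AnalyticOnNhd ℂ V Set.univ := fun x _ => hV.analyticAt x
  have hVd : ∀ x : ℂ, DifferentiableAt ℂ (deriv V) x := fun x =>
    ((hVan.deriv x (Set.mem_univ x)).differentiableAt)
  -- Part 1
  have key : ∀ t ∈ I,
      HasDerivAt (fun τ : ℝ => -((β : ℂ) / 2) * U τ (z τ) - deriv V (z τ))
        (deriv (deriv V) (z t) * deriv V (z t) - ((β : ℂ) / 2) * deriv T (z t)) t := by
    intro t ht
    have hx : z t ∈ Ω := hzΩ t ht
    set x := z t with hxdef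
    have hz' : HasDerivAt z (-((β : ℂ) / 2) * U t x - deriv V x) t := hzder t ht
    set zd : ℂ := -((β : ℂ) / 2) * U t x - deriv V x with hzd
    have hmem : (t, x) ∈ I ×ˢ Ω := ⟨ht, hx⟩
    have hopen : IsOpen (I ×ˢ Ω) := hIopen.prod hΩ
    have hF : DifferentiableAt ℝ (fun p : ℝ × ℂ => U p.1 p.2) (t, x) :=
      (hUC1.contDiffAt (hopen.mem_nhds hmem)).differentiableAt one_ne_zero
    set L := fderiv ℝ (fun p : ℝ × ℂ => U p.1 p.2) (t, x) with hL
    have hFd : HasFDerivAt (fun p : ℝ × ℂ => U p.1 p.2) L (t, x) := hF.hasFDerivAt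
    -- derivative of t ↦ U t (z t)
    have hc : HasDerivAt (fun τ : ℝ => ((τ : ℝ), z τ)) ((1 : ℝ), zd) t :=
      HasDerivAt.prodMk (hasDerivAt_id t) hz'
    have hg : HasDerivAt (fun τ : ℝ => U τ (z τ)) (L (1, zd)) t :=
      by have := HasFDerivAt.comp_hasDerivAt (hl := hFd) (hf := hc); exact this
    -- partial in t
    have hpt : HasDerivAt (fun τ : ℝ => U τ x) (L (1, 0)) t := by
      have hc2 : HasDerivAt (fun τ : ℝ => ((τ : ℝ), x)) ((1 : ℝ), (0 : ℂ)) t :=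
        HasDerivAt.prodMk (hasDerivAt_id t) (hasDerivAt_const t x)
      exact HasFDerivAt.comp_hasDerivAt (hl := hFd) (hf := hc2)
    -- partial in z is complex-linear
    have hpz : L (0, zd) = deriv (U t) x * zd := by
      have hc3 : HasFDerivAt (fun w : ℂ => ((t : ℝ), w))
          (ContinuousLinearMap.inr ℝ ℝ ℂ) x :=
        HasFDerivAt.prodMk (hasFDerivAt_const t x) (hasFDerivAt_id x)
      have h1 : HasFDerivAt (U t) (L.comp (ContinuousLinearMap.inr ℝ ℝ ℂ)) x :=
        hFd.comp x hc3
      have h2 : HasFDerivAt (U t)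
          ((ContinuousLinearMap.smulRight (1 : ℂ →L[ℂ] ℂ)
            (deriv (U t) x)).restrictScalars ℝ) x :=
        ((hUhol t ht x hx).hasDerivAt).hasFDerivAt.restrictScalars ℝ
      have heq := h1.unique h2
      calc L (0, zd) = (L.comp (ContinuousLinearMap.inr ℝ ℝ ℂ)) zd := by simp
        _ = deriv (U t) x * zd := by rw [heq]; simp [mul_comm]
    have hsplit : L (1, zd) = L (1, 0) + L (0, zd) := by
      rw [← map_add]; norm_num
    have hg' : HasDerivAt (fun τ : ℝ => U τ (z τ))
        (deriv (fun τ : ℝ => U τ x) t + deriv (U t) x * zd) t := by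
      rw [hpt.deriv, ← hpz, ← hsplit]; exact hg
    -- derivative of t ↦ deriv V (z t)
    have hVz : HasDerivAt (fun τ : ℝ => deriv V (z τ)) (zd • deriv (deriv V) x) t :=
      HasDerivAt.scomp t ((hVd x).hasDerivAt) hz'
    have hw : HasDerivAt (fun τ : ℝ => -((β : ℂ) / 2) * U τ (z τ) - deriv V (z τ))
        (-((β : ℂ) / 2) * (deriv (fun τ : ℝ => U τ x) t + deriv (U t) x * zd)
          - zd • deriv (deriv V) x) t :=
      (hg'.const_mul (-((β : ℂ) / 2))).sub hVz
    have : -((β : ℂ) / 2) * (deriv (fun τ : ℝ => U τ x) t + deriv (U t) x * zd)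
        - zd • deriv (deriv V) x
        = deriv (deriv V) x * deriv V x - ((β : ℂ) / 2) * deriv T x := by
      rw [hPDE t ht x hx, hzd]
      simp only [smul_eq_mul]
      ring
    rwa [this] at hw
  refine ⟨key, ?_⟩
  -- Part 2: conserved quantity
  set E : ℝ → ℂ := fun τ =>
    (-((β : ℂ) / 2) * U τ (z τ) - deriv V (z τ)) ^ 2 - (deriv V (z τ)) ^ 2
      + (β : ℂ) * T (z τ) with hE
  have hE0 : ∀ t ∈ I, HasDerivAt E 0 t := by
    intro t ht
    have hx : z t ∈ Ω := hzΩ t ht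
    have hz' := hzder t ht
    set zd : ℂ := -((β : ℂ) / 2) * U t (z t) - deriv V (z t) with hzd
    set D : ℂ := deriv (deriv V) (z t) * deriv V (z t) - ((β : ℂ) / 2) * deriv T (z t)
      with hD
    have hf := key t ht
    have h1 : HasDerivAt (fun τ : ℝ =>
        (-((β : ℂ) / 2) * U τ (z τ) - deriv V (z τ)) ^ 2) (D * zd + zd * D) t := by
      simpa only [pow_two, Pi.mul_def] using hf.mul hf
    have hVz : HasDerivAt (fun τ : ℝ => deriv V (z τ)) (zd • deriv (deriv V) (z t)) t :=
      HasDerivAt.scomp t ((hVd (z t)).hasDerivAt) hz'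
    have h2 : HasDerivAt (fun τ : ℝ => (deriv V (z τ)) ^ 2)
        ((zd • deriv (deriv V) (z t)) * deriv V (z t)
          + deriv V (z t) * (zd • deriv (deriv V) (z t))) t := by
      simpa only [pow_two, Pi.mul_def] using hVz.mul hVz
    have hTz : HasDerivAt (fun τ : ℝ => T (z τ)) (zd • deriv T (z t)) t :=
      HasDerivAt.scomp t ((hT (z t) hx).hasDerivAt) hz'
    have h3 : HasDerivAt (fun τ : ℝ => (β : ℂ) * T (z τ))
        ((β : ℂ) * (zd • deriv T (z t))) t := hTz.const_mul _
    have hsum := (h1.sub h2).add h3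
    have : D * zd + zd * D - ((zd • deriv (deriv V) (z t)) * deriv V (z t)
          + deriv V (z t) * (zd • deriv (deriv V) (z t)))
        + (β : ℂ) * (zd • deriv T (z t)) = 0 := by
      simp only [smul_eq_mul, hD, hzd]
      ring
    rwa [this] at hsum
  have hconv : Convex ℝ I := convex_iff_ordConnected.mpr hIconn
  intro t₁ ht₁ t₂ ht₂
  have hle : ‖E t₁ - E t₂‖ ≤ 0 * ‖t₁ - t₂‖ :=
    hconv.norm_image_sub_le_of_norm_hasDerivWithin_le
      (fun x hx => (hE0 x hx).hasDerivWithinAt)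
      (fun x _ => by simp) ht₂ ht₁
  have : E t₁ = E t₂ := by
    rw [zero_mul] at hle
    exact sub_eq_zero.mp (norm_le_zero_iff.mp hle)
  simpa [hE] using this
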